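/- Let G be a countable tournament. Then there exists a countable linearly ordered set Q partitioned into disjoint subsets Q_1, Q_2, I, and pairwise disjoint induced subtournaments {G_i}_{i∈Q} with ⋃_{i∈Q} V(G_i) = V(G), such that G = ⊕_{i∈Q} G_i, where each G_i with i ∈ Q_1 is irreducible with at least two vertices, each G_i with i ∈ Q_2 is transitive with at least two vertices, each G_i with i ∈ I is a single vertex, and for any i < j in Q_2 ∪ I there exists k ∈ Q_1 with i < k < j. This decomposition is unique up to order isomorphism of Q. -/

import Mathlib

/-- `E` is the edge relation of a tournament: irreflexive, and between any two distinct
vertices exactly one direction is present. -/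
def IsTournament {V : Type*} (E : V → V → Prop) : Prop :=
  (∀ v : V, ¬ E v v) ∧ ∀ u v : V, u ≠ v → (E u v ↔ ¬ E v u)

/-- A tournament is irreducible if it is not the direct sum of two nonempty induced
subtournaments. -/
def TourIrreducible {V : Type*} (E : V → V → Prop) : Prop :=
  ¬ ∃ B : Set V, B.Nonempty ∧ Bᶜ.Nonempty ∧ ∀ v ∈ B, ∀ w ∈ Bᶜ, E v w

/-- `part : V → Q` exhibits `(V, E)` as a direct sum over the linearly ordered set `Q`,
partitioned into `Q1` (irreducible components with at least two vertices), `Q2`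
(transitive components with at least two vertices) and `I` (singleton components),
with no two `Q2 ∪ I`-indices adjacent without a `Q1`-index strictly between them. -/
def IsRefinedDecomp {V Q : Type*} [LinearOrder Q] (E : V → V → Prop) (part : V → Q)
    (Q1 Q2 I : Set Q) : Prop :=
  Function.Surjective part ∧
  Q1 ∪ Q2 ∪ I = Set.univ ∧ Q1 ∩ Q2 = ∅ ∧ Q1 ∩ I = ∅ ∧ Q2 ∩ I = ∅ ∧
  (∀ v w : V, part v < part w → E v w) ∧
  (∀ i ∈ Q1, TourIrreducible (fun v w : {x : V // part x = i} => E v.1 w.1) ∧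
    ∃ v w : V, part v = i ∧ part w = i ∧ v ≠ w) ∧
  (∀ i ∈ Q2, (∀ u v w : V, part u = i → part v = i → part w = i →
      E u v → E v w → E u w) ∧ ∃ v w : V, part v = i ∧ part w = i ∧ v ≠ w) ∧
  (∀ i ∈ I, ∃! v : V, part v = i) ∧
  (∀ i ∈ Q2 ∪ I, ∀ j ∈ Q2 ∪ I, i < j → ∃ k ∈ Q1, i < k ∧ k < j)

section Stmt3Aux

variable {V : Type} (E : V → V → Prop)

/-- Reachability. -/
def st3R : V → V → Prop := Relation.ReflTransGen E

/-- Same strongly connected component. -/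
def st3scc (v w : V) : Prop := st3R E v w ∧ st3R E w v

/-- `v`'s SCC is a singleton. -/
def st3sing (v : V) : Prop := ∀ u, st3scc E v u → u = v

/-- `u` lies (reachability-)between `v` and `w`. -/
def st3btw (v w u : V) : Prop :=
  (st3R E v u ∧ st3R E u w) ∨ (st3R E w u ∧ st3R E u v)

/-- The refined equivalence: same SCC, or everything between is a singleton SCC. -/
def st3req (v w : V) : Prop :=
  st3scc E v w ∨ ∀ u, st3btw E v w u → st3sing E u

variable {E}

theorem st3_not_rev (hT : IsTournament E) {x y : V} (h : E x y) : ¬ E y x := by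
  rcases eq_or_ne x y with rfl | hne
  · exact fun _ => hT.1 x h
  · exact ((hT.2 x y hne).1 h)

theorem st3_or (hT : IsTournament E) {x y : V} (hne : x ≠ y) : E x y ∨ E y x := by
  by_cases h : E x y
  · exact Or.inl h
  · exact Or.inr (((hT.2 y x hne.symm).2) (by simpa using h))

theorem st3R_of_E {x y : V} (h : E x y) : st3R E x y := Relation.ReflTransGen.single h

theorem st3R_refl (x : V) : st3R E x x := Relation.ReflTransGen.refl

theorem st3R_trans {x y z : V} (h : st3R E x y) (h' : st3R E y z) : st3R E x z :=
  Relation.ReflTransGen.trans h h'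

theorem st3R_total (hT : IsTournament E) (x y : V) : st3R E x y ∨ st3R E y x := by
  rcases eq_or_ne x y with rfl | hne
  · exact Or.inl (st3R_refl x)
  · rcases st3_or hT hne with h | h
    · exact Or.inl (st3R_of_E h)
    · exact Or.inr (st3R_of_E h)

theorem st3scc_refl (x : V) : st3scc E x x := ⟨st3R_refl x, st3R_refl x⟩

theorem st3scc_symm {x y : V} (h : st3scc E x y) : st3scc E y x := ⟨h.2, h.1⟩

theorem st3scc_trans {x y z : V} (h : st3scc E x y) (h' : st3scc E y z) : st3scc E x z :=
  ⟨st3R_trans h.1 h'.1, st3R_trans h'.2 h.2⟩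

theorem st3btw_symm {v w u : V} (h : st3btw E v w u) : st3btw E w v u := h.symm

theorem st3req_refl (x : V) : st3req E x x := Or.inl (st3scc_refl x)

theorem st3req_symm {x y : V} (h : st3req E x y) : st3req E y x := by
  rcases h with h | h
  · exact Or.inl (st3scc_symm h)
  · exact Or.inr fun u hu => h u (st3btw_symm hu)

theorem st3btw_self_left (hT : IsTournament E) (v w : V) : st3btw E v w v := by
  rcases st3R_total hT v w with h | h
  · exact Or.inl ⟨st3R_refl v, h⟩
  · exact Or.inr ⟨h, st3R_refl v⟩

theorem st3btw_self_right (hT : IsTournament E) (v w : V) : st3btw E v w w :=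
  st3btw_symm (st3btw_self_left hT w v)

theorem st3req_trans (hT : IsTournament E) {x y z : V}
    (h : st3req E x y) (h' : st3req E y z) : st3req E x z := by
  rcases h with h | h
  · rcases h' with h' | h'
    · exact Or.inl (st3scc_trans h h')
    · have hy : st3sing E y := h' y (st3btw_self_left hT y z)
      have hxy : x = y := hy x (st3scc_symm h)
      subst hxy; exact Or.inr h'
  · rcases h' with h' | h'
    · have hy : st3sing E y := h y (st3btw_self_right hT x y)
      have hzy : z = y := hy z h'
      subst hzy; exact Or.inr h
    · refine Or.inr fun u hu => ?_
      rcases hu with ⟨h1, h2⟩ | ⟨h1, h2⟩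
      · rcases st3R_total hT u y with hc | hc
        · exact h u (Or.inl ⟨h1, hc⟩)
        · exact h' u (Or.inl ⟨hc, h2⟩)
      · rcases st3R_total hT u y with hc | hc
        · exact h' u (Or.inr ⟨h1, hc⟩)
        · exact h u (Or.inr ⟨hc, h2⟩)

/-- Key: moving the left endpoint within a refined class preserves strict `R`-above. -/
theorem st3key_left (hT : IsTournament E) {v v' w : V}
    (hvv : st3req E v v') (hR : st3R E v w) (hnr : ¬ st3req E v w) : st3R E v' w := by
  rcases hvv with hs | h2
  · exact st3R_trans hs.2 hR
  · rcases st3R_total hT v' w with h | h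
    · exact h
    · -- derive st3req E v w, contradiction
      exfalso; apply hnr
      by_cases hscc : st3scc E v w
      · exact Or.inl hscc
      · refine Or.inr fun u hu => ?_
        rcases hu with ⟨h1, hh2⟩ | ⟨h1, hh2⟩
        · exact h2 u (Or.inl ⟨h1, st3R_trans hh2 h⟩)
        · exact h2 u (Or.inl ⟨st3R_trans hR h1, st3R_trans hh2 (st3R_trans hR h)⟩)

/-- Key: moving the right endpoint within a refined class preserves strict `R`-below. -/
theorem st3key_right (hT : IsTournament E) {v w w' : V}
    (hww : st3req E w w') (hR : st3R E v w) (hnr : ¬ st3req E v w) : st3R E v w' := by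
  rcases hww with hs | h2
  · exact st3R_trans hR hs.1
  · rcases st3R_total hT v w' with h | h
    · exact h
    · exfalso; apply hnr
      by_cases hscc : st3scc E v w
      · exact Or.inl hscc
      · refine Or.inr fun u hu => ?_
        rcases hu with ⟨h1, hh2⟩ | ⟨h1, hh2⟩
        · exact h2 u (Or.inr ⟨st3R_trans h h1, hh2⟩)
        · exact h2 u (Or.inr ⟨st3R_trans h (st3R_trans hR h1), st3R_trans hh2 hR⟩)

theorem st3lt_congr (hT : IsTournament E) {a a' b b' : V}
    (ha : st3req E a a') (hb : st3req E b b') :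
    (st3R E a b ∧ ¬ st3req E a b) ↔ (st3R E a' b' ∧ ¬ st3req E a' b') := by
  have main : ∀ {a a' b b' : V}, st3req E a a' → st3req E b b' →
      st3R E a b ∧ ¬ st3req E a b → st3R E a' b' ∧ ¬ st3req E a' b' := by
    rintro a a' b b' ha hb ⟨hR, hn⟩
    have hn' : ¬ st3req E a' b := fun h => hn (st3req_trans hT ha h)
    have hR' : st3R E a' b := st3key_left hT ha hR hn
    have hn'' : ¬ st3req E a' b' := fun h =>
      hn' (st3req_trans hT h (st3req_symm hb))
    exact ⟨st3key_right hT hb hR' hn', hn''⟩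
  exact ⟨main ha hb, main (st3req_symm ha) (st3req_symm hb)⟩

variable (E)

/-- The setoid of the refined equivalence. -/
def st3setoid (hT : IsTournament E) : Setoid V :=
  ⟨st3req E, ⟨st3req_refl, st3req_symm, fun h h' => st3req_trans hT h h'⟩⟩

/-- The canonical index type. -/
def st3Q (hT : IsTournament E) : Type := Quotient (st3setoid E hT)

variable {E}
variable (hT : IsTournament E)

def st3mk (v : V) : st3Q E hT := Quotient.mk (st3setoid E hT) v

theorem st3mk_eq {v w : V} : st3mk hT v = st3mk hT w ↔ st3req E v w :=
  Quotient.eq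

def st3qlt : st3Q E hT → st3Q E hT → Prop :=
  Quotient.lift₂ (fun v w => st3R E v w ∧ ¬ st3req E v w)
    (fun _ _ _ _ ha hb => propext (st3lt_congr hT ha hb))

theorem st3qlt_mk {v w : V} :
    st3qlt hT (st3mk hT v) (st3mk hT w) ↔ (st3R E v w ∧ ¬ st3req E v w) := Iff.rfl

instance : IsStrictTotalOrder (st3Q E hT) (st3qlt hT) where
  irrefl := by
    rintro ⟨v⟩ ⟨h1, h2⟩
    exact h2 (st3req_refl v)
  trans := by
    rintro ⟨a⟩ ⟨b⟩ ⟨c⟩ ⟨h1, h2⟩ ⟨h3, h4⟩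
    refine ⟨st3R_trans h1 h3, fun hac => ?_⟩
    have : st3R E c b := st3key_left hT hac h1 h2
    exact h4 (Or.inl ⟨h3, this⟩)
  trichotomous := by
    rintro ⟨a⟩ ⟨b⟩ hab hba
    by_cases h : st3req E a b
    · exact Quot.sound h
    · rcases st3R_total hT a b with hr | hr
      · exact (hab ⟨hr, h⟩).elim
      · exact (hba ⟨hr, fun hh => h (st3req_symm hh)⟩).elim

noncomputable instance st3LO : LinearOrder (st3Q E hT) := by
  classical exact linearOrderOfSTO (st3qlt hT)

theorem st3lt_iff {v w : V} :
    st3mk hT v < st3mk hT w ↔ (st3R E v w ∧ ¬ st3req E v w) := Iff.rfl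

include hT in
theorem st3sum {v w : V} (h : st3mk hT v < st3mk hT w) : E v w := by
  obtain ⟨hR, hn⟩ := (st3lt_iff hT).1 h
  have hne : v ≠ w := fun hvw => hn (hvw ▸ st3req_refl v)
  rcases st3_or hT hne with he | he
  · exact he
  · exact absurd (Or.inl ⟨hR, st3R_of_E he⟩) hn

include hT in
/-- If `u` has a nontrivial SCC then its refined class is exactly its SCC. -/
theorem st3classA {u u' x : V} (hs : st3scc E u u') (hne : u' ≠ u)
    (hr : st3req E u x) : st3scc E u x := by
  rcases hr with h | h
  · exact h
  · exact absurd (fun z hz => (h u (st3btw_self_left hT u x)) z hz) (fun hsing => hne (hsing u' hs))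

def st3Q1 : Set (st3Q E hT) :=
  {c | ∃ v w, st3mk hT v = c ∧ st3mk hT w = c ∧ st3scc E v w ∧ v ≠ w}

def st3I : Set (st3Q E hT) := {c | ∃! v, st3mk hT v = c}

def st3Q2 : Set (st3Q E hT) := {c | c ∉ st3Q1 hT ∧ c ∉ st3I hT}

/-- Fibers of classes in `Q1` are irreducible. -/
theorem st3Q1_irred {c : st3Q E hT} (hc : c ∈ st3Q1 hT) :
    TourIrreducible (fun v w : {x : V // st3mk hT x = c} => E v.1 w.1) := by
  obtain ⟨u, u', hu, hu', hs, hne⟩ := hc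
  rintro ⟨B, ⟨⟨b0, hb0c⟩, hb0⟩, ⟨⟨a0, ha0c⟩, ha0⟩, hedge⟩
  have hfib : ∀ x : V, st3mk hT x = c → st3scc E u x := fun x hx =>
    st3classA hT hs (fun h => hne h.symm) ((st3mk_eq hT).1 (hu.trans hx.symm))
  have hfib' : ∀ x : V, st3scc E u x → st3mk hT x = c := fun x hx =>
    ((st3mk_eq hT).2 (Or.inl hx)).symm.trans hu
  have hab : st3R E a0 b0 :=
    st3R_trans (hfib a0 ha0c).2 (hfib b0 hb0c).1
  have key : ∀ x (_ : Relation.ReflTransGen E x b0), st3scc E u x →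
      (∀ h : st3mk hT x = c, (⟨x, h⟩ : {x : V // st3mk hT x = c}) ∈ Bᶜ) → False := by
    intro x hx
    refine Relation.ReflTransGen.head_induction_on
      (motive := fun y (_ : Relation.ReflTransGen E y b0) => st3scc E u y →
        (∀ h : st3mk hT y = c, (⟨y, h⟩ : {x : V // st3mk hT x = c}) ∈ Bᶜ) → False)
      hx ?_ ?_
    · intro _ hmem
      exact (hmem hb0c) hb0
    · intro a' c0 hstep htail ih hsa hmem
      have hsc0 : st3scc E u c0 :=
        ⟨st3R_trans hsa.1 (st3R_of_E hstep), st3R_trans htail (hfib b0 hb0c).2⟩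
      refine ih hsc0 ?_
      intro h
      by_contra hc0mem
      have hc0B : (⟨c0, h⟩ : {x : V // st3mk hT x = c}) ∈ B := by
        simpa using hc0mem
      have := hedge _ hc0B _ (hmem (hfib' a' hsa))
      exact st3_not_rev hT hstep this
  exact key a0 hab (hfib a0 ha0c) (fun h => by simpa [Subtype.ext_iff] using ha0)

include hT in
/-- Fibers of classes not in `Q1` are transitive. -/
theorem st3Q2_trans {c : st3Q E hT} (hc : c ∉ st3Q1 hT) :
    ∀ u v w : V, st3mk hT u = c → st3mk hT v = c → st3mk hT w = c →
      E u v → E v w → E u w := by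
  intro u v w hu hv hw huv hvw
  have hne : u ≠ w := by
    rintro rfl
    exact st3_not_rev hT huv hvw
  rcases st3_or hT hne with he | he
  · exact he
  · exfalso
    exact hc ⟨u, v, hu, hv,
      ⟨st3R_of_E huv, st3R_trans (st3R_of_E hvw) (st3R_of_E he)⟩,
      fun h => hT.1 u (h ▸ huv)⟩

theorem st3Q1_I_disj : st3Q1 hT ∩ st3I hT = ∅ := by
  ext c
  simp only [Set.mem_inter_iff, Set.mem_empty_iff_false, iff_false, not_and]
  rintro ⟨v, w, hv, hw, _, hne⟩ ⟨x, _, hx⟩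
  exact hne ((hx v hv).trans (hx w hw).symm)

/-- Separation: between two non-`Q1` classes there is a `Q1` class. -/
theorem st3sep {i j : st3Q E hT} (hi : i ∉ st3Q1 hT) (hj : j ∉ st3Q1 hT)
    (hij : i < j) : ∃ k ∈ st3Q1 hT, i < k ∧ k < j := by
  obtain ⟨v, rfl⟩ := Quotient.exists_rep i
  obtain ⟨w, rfl⟩ := Quotient.exists_rep j
  obtain ⟨hR, hn⟩ := (st3lt_iff hT).1 hij
  have h2 : ¬ ∀ u, st3btw E v w u → st3sing E u := fun h => hn (Or.inr h)
  push_neg at h2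
  obtain ⟨u, hbtw, hnsing⟩ := h2
  simp only [st3sing, not_forall] at hnsing
  obtain ⟨u', hscc, hne⟩ := hnsing
  have hmk : st3mk hT u' = st3mk hT u := (st3mk_eq hT).2 (Or.inl (st3scc_symm hscc))
  have hbtw' : st3R E v u ∧ st3R E u w := by
    rcases hbtw with h | ⟨h1, h2⟩
    · exact h
    · exact absurd (Or.inl ⟨hR, st3R_trans h1 h2⟩) hn
  refine ⟨st3mk hT u, ⟨u, u', rfl, hmk, hscc, Ne.symm hne⟩, ?_, ?_⟩
  · refine (st3lt_iff hT).2 ⟨hbtw'.1, fun h => ?_⟩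
    have e1 : st3mk hT u = st3mk hT v := (st3mk_eq hT).2 (st3req_symm h)
    exact hi ⟨u, u', e1, hmk.trans e1, hscc, Ne.symm hne⟩
  · refine (st3lt_iff hT).2 ⟨hbtw'.2, fun h => ?_⟩
    have e2 : st3mk hT u = st3mk hT w := (st3mk_eq hT).2 h
    exact hj ⟨u, u', e2, hmk.trans e2, hscc, Ne.symm hne⟩

section Uniqueness

variable {Q' : Type} [LinearOrder Q'] {part' : V → Q'} {Q1' Q2' I' : Set Q'}
variable (hd : IsRefinedDecomp E part' Q1' Q2' I')

include hT hd

theorem st3U0 {x y : V} (h : E x y) : part' x ≤ part' y := by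
  by_contra hlt
  exact st3_not_rev hT h (hd.2.2.2.2.2.1 y x (lt_of_not_ge hlt))

theorem st3U1 {x y : V} (h : st3R E x y) : part' x ≤ part' y := by
  induction h with
  | refl => exact le_refl _
  | tail _ hstep ih => exact le_trans ih (st3U0 hT hd hstep)

/-- The fiber of a `Q1'` index is a single SCC. -/
theorem st3U2 {v w : V} (hv : part' v ∈ Q1') (hw : part' w = part' v) : st3scc E v w := by
  have hirr := (hd.2.2.2.2.2.2.1 _ hv).1
  have reach : ∀ a b : {x : V // part' x = part' v},
      Relation.ReflTransGen (fun a b : {x : V // part' x = part' v} => E a.1 b.1) a b := by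
    intro a b
    by_contra hnab
    refine hirr ⟨{x | ¬ Relation.ReflTransGen
      (fun a b : {x : V // part' x = part' v} => E a.1 b.1) a x}, ⟨b, hnab⟩,
      ⟨a, not_not_intro Relation.ReflTransGen.refl⟩, ?_⟩
    intro x hx y hy
    have hyr : Relation.ReflTransGen
        (fun a b : {x : V // part' x = part' v} => E a.1 b.1) a y := by simpa using hy
    have hne : x.1 ≠ y.1 := by
      intro hxy
      exact hx (Subtype.ext hxy ▸ hyr)
    rcases st3_or hT hne with he | he
    · exact he
    · exact absurd (hyr.tail he) hx
  have lift : ∀ a b : {x : V // part' x = part' v},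
      Relation.ReflTransGen (fun a b : {x : V // part' x = part' v} => E a.1 b.1) a b →
      st3R E a.1 b.1 := fun a b h =>
    Relation.ReflTransGen.lift Subtype.val (fun _ _ h => h) _ _ h
  exact ⟨lift ⟨v, rfl⟩ ⟨w, hw⟩ (reach _ _), lift ⟨w, hw⟩ ⟨v, rfl⟩ (reach _ _)⟩

/-- Fibers of `Q2' ∪ I'` indices are singleton SCCs. -/
theorem st3U3 {v w : V} (hv : part' v ∈ Q2' ∪ I') (hs : st3scc E v w) : w = v := by
  have hwv : part' w = part' v :=
    le_antisymm (st3U1 hT hd hs.2) (st3U1 hT hd hs.1)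
  rcases hv with hv | hv
  · -- transitive fiber
    have htr := (hd.2.2.2.2.2.2.2.1 _ hv).1
    have SL : ∀ b : V, part' b = part' v → ∀ x, Relation.ReflTransGen E x b →
        part' x = part' v → x = b ∨ E x b := by
      intro b hb x hx
      refine Relation.ReflTransGen.head_induction_on
        (motive := fun y (_ : Relation.ReflTransGen E y b) =>
          part' y = part' v → y = b ∨ E y b) hx (fun _ => Or.inl rfl) ?_
      intro a' c0 hstep htail ih ha'
      have hc0 : part' c0 = part' v :=
        le_antisymm ((st3U1 hT hd htail).trans (le_of_eq hb))
          ((le_of_eq ha'.symm).trans (st3U0 hT hd hstep))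
      rcases ih hc0 with rfl | hcb
      · exact Or.inr hstep
      · exact Or.inr (htr a' c0 b ha' hc0 hb hstep hcb)
    by_contra hne
    rcases SL v rfl w hs.2 hwv with h | h
    · exact hne h
    · rcases SL w hwv v hs.1 rfl with h' | h'
      · exact hne h'.symm
      · exact st3_not_rev hT h h'
  · obtain ⟨x, -, hx⟩ := hd.2.2.2.2.2.2.2.2.1 _ hv
    exact (hx w hwv).trans (hx v rfl).symm

theorem st3nontriv {u : V} (hu : part' u ∈ Q1') : ¬ st3sing E u := by
  intro hsing
  obtain ⟨x, y, hx, hy, hxy⟩ := (hd.2.2.2.2.2.2.1 _ hu).2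
  rcases eq_or_ne x u with rfl | hxu
  · exact hxy (hsing y (st3U2 hT hd hu (hy.trans hx.symm))).symm
  · exact hxu (hsing x (st3U2 hT hd hu hx))

omit hT in
theorem st3univ' (c : Q') : c ∈ Q1' ∪ (Q2' ∪ I') := by
  have := Set.eq_univ_iff_forall.mp hd.2.1 c
  simpa [Set.union_assoc] using this

theorem st3fiber_mp {v w : V} (h : part' v = part' w) : st3req E v w := by
  rcases st3univ' hd (part' v) with hv | hv
  · exact Or.inl (st3U2 hT hd hv h.symm)
  · refine Or.inr fun u hu => ?_
    have hpu : part' u = part' v := by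
      rcases hu with ⟨h1, h2⟩ | ⟨h1, h2⟩
      · exact le_antisymm ((st3U1 hT hd h2).trans (le_of_eq h.symm)) (st3U1 hT hd h1)
      · exact le_antisymm (st3U1 hT hd h2) ((le_of_eq h).trans (st3U1 hT hd h1))
    intro z hz
    exact st3U3 hT hd (hpu ▸ hv) hz

theorem st3fiber_helper {v w : V} (hlt : part' v < part' w) (hr : st3req E v w) : False := by
  have hE : E v w := hd.2.2.2.2.2.1 v w hlt
  have h2 : ∀ u, st3btw E v w u → st3sing E u := by
    rcases hr with hs | h2
    · exact absurd (st3U1 hT hd hs.2) (not_le_of_gt hlt)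
    · exact h2
  have hvs : st3sing E v := h2 v (st3btw_self_left hT v w)
  have hws : st3sing E w := h2 w (st3btw_self_right hT v w)
  have hv2 : part' v ∈ Q2' ∪ I' :=
    (st3univ' hd (part' v)).resolve_left fun h => st3nontriv hT hd h hvs
  have hw2 : part' w ∈ Q2' ∪ I' :=
    (st3univ' hd (part' w)).resolve_left fun h => st3nontriv hT hd h hws
  obtain ⟨k, hk, hk1, hk2⟩ := hd.2.2.2.2.2.2.2.2.2 _ hv2 _ hw2 hlt
  obtain ⟨u, rfl⟩ := hd.1 k
  have hbu : st3btw E v w u := Or.inl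
    ⟨st3R_of_E (hd.2.2.2.2.2.1 v u hk1), st3R_of_E (hd.2.2.2.2.2.1 u w hk2)⟩
  exact st3nontriv hT hd hk (h2 u hbu)

theorem st3fiber_iff {v w : V} : part' v = part' w ↔ st3req E v w := by
  refine ⟨st3fiber_mp hT hd, fun hr => ?_⟩
  rcases lt_trichotomy (part' v) (part' w) with h | h | h
  · exact absurd hr fun hr => st3fiber_helper hT hd h hr
  · exact h
  · exact absurd (st3req_symm hr) fun hr => st3fiber_helper hT hd h hr

theorem st3Q1_iff {v : V} : st3mk hT v ∈ st3Q1 hT ↔ part' v ∈ Q1' := by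
  constructor
  · rintro ⟨x, y, hx, hy, hscc, hne⟩
    have hpx : part' x = part' v := (st3fiber_iff hT hd).2 ((st3mk_eq hT).1 hx)
    rcases st3univ' hd (part' v) with h | h
    · exact h
    · exact absurd (st3U3 hT hd (hpx ▸ h) hscc) hne.symm
  · intro hv
    obtain ⟨x, y, hx, hy, hxy⟩ := (hd.2.2.2.2.2.2.1 _ hv).2
    have hsx : st3scc E v x := st3U2 hT hd hv hx
    have hsy : st3scc E v y := st3U2 hT hd hv hy
    exact ⟨x, y, (st3mk_eq hT).2 ((st3fiber_iff hT hd).1 hx),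
      (st3mk_eq hT).2 ((st3fiber_iff hT hd).1 hy),
      st3scc_trans (st3scc_symm hsx) hsy, hxy⟩

theorem st3I_iff {v : V} : st3mk hT v ∈ st3I hT ↔ part' v ∈ I' := by
  constructor
  · rintro ⟨x, hx, hux⟩
    rcases st3univ' hd (part' v) with h | h
    · obtain ⟨a, b, ha, hb, hab⟩ := (hd.2.2.2.2.2.2.1 _ h).2
      exact absurd ((hux a ((st3mk_eq hT).2 ((st3fiber_iff hT hd).1 ha))).trans
        (hux b ((st3mk_eq hT).2 ((st3fiber_iff hT hd).1 hb))).symm) hab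
    · rcases h with h | h
      · obtain ⟨a, b, ha, hb, hab⟩ := (hd.2.2.2.2.2.2.2.1 _ h).2
        exact absurd ((hux a ((st3mk_eq hT).2 ((st3fiber_iff hT hd).1 ha))).trans
          (hux b ((st3mk_eq hT).2 ((st3fiber_iff hT hd).1 hb))).symm) hab
      · exact h
  · intro hv
    obtain ⟨x, hx, hux⟩ := hd.2.2.2.2.2.2.2.2.1 _ hv
    refine ⟨x, (st3mk_eq hT).2 ((st3fiber_iff hT hd).1 hx), fun z hz => ?_⟩
    exact hux z ((st3fiber_iff hT hd).2 ((st3mk_eq hT).1 hz))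

theorem st3Q2_iff {v : V} : st3mk hT v ∈ st3Q2 hT ↔ part' v ∈ Q2' := by
  constructor
  · rintro ⟨h1, h2⟩
    rcases st3univ' hd (part' v) with h | h
    · exact absurd ((st3Q1_iff hT hd).2 h) h1
    · rcases h with h | h
      · exact h
      · exact absurd ((st3I_iff hT hd).2 h) h2
  · intro hv
    refine ⟨fun h => ?_, fun h => ?_⟩
    · have := hd.2.2.1
      have : part' v ∈ Q1' ∩ Q2' := ⟨(st3Q1_iff hT hd).1 h, hv⟩
      simp [hd.2.2.1] at this
    · have : part' v ∈ Q2' ∩ I' := ⟨hv, (st3I_iff hT hd).1 h⟩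
      simp [hd.2.2.2.2.1] at this

end Uniqueness

end Stmt3Aux


/-- Every countable tournament decomposes as a direct sum of irreducible components with
at least two vertices, transitive components with at least two vertices, and singletons,
with transitive/singleton components separated by irreducible ones; the decomposition is
unique up to order isomorphism of the index set. -/
theorem stmt3 {V : Type} [Countable V] (E : V → V → Prop) (hT : IsTournament E) :
    ∃ (Q : Type) (_ : LinearOrder Q) (part : V → Q) (Q1 Q2 I : Set Q),
      Countable Q ∧ IsRefinedDecomp E part Q1 Q2 I ∧
      (∀ (Q' : Type) (_ : LinearOrder Q') (part' : V → Q') (Q1' Q2' I' : Set Q'),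
        IsRefinedDecomp E part' Q1' Q2' I' →
        ∃ f : Q ≃o Q', (∀ v : V, part' v = f (part v)) ∧
          f '' Q1 = Q1' ∧ f '' Q2 = Q2' ∧ f '' I = I') := by
  classical
  refine ⟨st3Q E hT, st3LO hT, st3mk hT, st3Q1 hT, st3Q2 hT, st3I hT, ?_, ?_, ?_⟩
  · show Countable (Quotient _)
    infer_instance
  · refine ⟨fun c => Quotient.exists_rep c, ?_, ?_, st3Q1_I_disj hT, ?_,
      fun v w h => st3sum hT h, ?_, ?_, fun i hi => hi, ?_⟩
    · refine Set.eq_univ_iff_forall.2 fun c => ?_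
      by_cases h1 : c ∈ st3Q1 hT
      · exact Or.inl (Or.inl h1)
      · by_cases h2 : c ∈ st3I hT
        · exact Or.inr h2
        · exact Or.inl (Or.inr ⟨h1, h2⟩)
    · ext c
      simp only [Set.mem_inter_iff, Set.mem_empty_iff_false, iff_false, not_and]
      exact fun h1 h2 => absurd h1 h2.1
    · ext c
      simp only [Set.mem_inter_iff, Set.mem_empty_iff_false, iff_false, not_and]
      exact fun h1 h2 => absurd h2 h1.2
    · rintro i hi
      refine ⟨st3Q1_irred hT hi, ?_⟩
      obtain ⟨v, w, hv, hw, _, hne⟩ := hi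
      exact ⟨v, w, hv, hw, hne⟩
    · rintro i hi
      refine ⟨st3Q2_trans hT hi.1, ?_⟩
      obtain ⟨v, hv⟩ := Quotient.exists_rep i
      by_contra hcon
      push_neg at hcon
      exact hi.2 ⟨v, hv, fun y hy => hcon y v hy hv⟩
    · intro i hi j hj hij
      have hi' : i ∉ st3Q1 hT := by
        rcases hi with hi | hi
        · exact hi.1
        · exact fun h => Set.eq_empty_iff_forall_notMem.mp (st3Q1_I_disj hT) i ⟨h, hi⟩
      have hj' : j ∉ st3Q1 hT := by
        rcases hj with hj | hj
        · exact hj.1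
        · exact fun h => Set.eq_empty_iff_forall_notMem.mp (st3Q1_I_disj hT) j ⟨h, hj⟩
      exact st3sep hT hi' hj' hij
  · intro Q' lo' part' Q1' Q2' I' hd
    set f0 : st3Q E hT → Q' :=
      Quotient.lift part' (fun a b h => (st3fiber_iff hT hd).2 h) with hf0
    have hmono : StrictMono f0 := by
      intro c d h
      obtain ⟨v, rfl⟩ := Quotient.exists_rep c
      obtain ⟨w, rfl⟩ := Quotient.exists_rep d
      obtain ⟨hR, hn⟩ := (st3lt_iff hT).1 h
      exact lt_of_le_of_ne (st3U1 hT hd hR) fun he => hn ((st3fiber_iff hT hd).1 he)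
    have hsurj : Function.Surjective f0 := by
      intro y
      obtain ⟨v, hv⟩ := hd.1 y
      exact ⟨st3mk hT v, hv⟩
    refine ⟨StrictMono.orderIsoOfSurjective f0 hmono hsurj, fun v => rfl, ?_, ?_, ?_⟩
    · ext y
      constructor
      · rintro ⟨c, hc, rfl⟩
        obtain ⟨v, rfl⟩ := Quotient.exists_rep c
        exact (st3Q1_iff hT hd).1 hc
      · intro hy
        obtain ⟨v, hv⟩ := hd.1 y
        exact ⟨st3mk hT v, (st3Q1_iff hT hd).2 (by rw [hv]; exact hy), hv⟩
    · ext y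
      constructor
      · rintro ⟨c, hc, rfl⟩
        obtain ⟨v, rfl⟩ := Quotient.exists_rep c
        exact (st3Q2_iff hT hd).1 hc
      · intro hy
        obtain ⟨v, hv⟩ := hd.1 y
        exact ⟨st3mk hT v, (st3Q2_iff hT hd).2 (by rw [hv]; exact hy), hv⟩
    · ext y
      constructor
      · rintro ⟨c, hc, rfl⟩
        obtain ⟨v, rfl⟩ := Quotient.exists_rep c
        exact (st3I_iff hT hd).1 hc
      · intro hy
        obtain ⟨v, hv⟩ := hd.1 y
        exact ⟨st3mk hT v, (st3I_iff hT hd).2 (by rw [hv]; exact hy), hv⟩
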